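/- Let R be an irreflexive, transitive, and proper menu-item relation on a set 𝒜, and let x, y ∈ 𝒜 be distinct elements such that ¬({y} R x). Then the transitive closure of R ∪ {({x}, y)} is irreflexive and proper. -/
import Mathlib


open Finset

set_option maxHeartbeats 1000000
set_option linter.unusedSectionVars false

/-- A menu-item relation is proper if `X R x` implies `X ≠ ∅`. -/
def MProper {α : Type*} (R : Finset α → α → Prop) : Prop :=
  ∀ X x, R X x → X ≠ ∅

/-- A menu-item relation is irreflexive if `X R x` implies `x ∉ X`. -/
def MIrrefl {α : Type*} (R : Finset α → α → Prop) : Prop :=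
  ∀ X x, R X x → x ∉ X

/-- Transitivity for menu-item relations. -/
def MTrans {α : Type*} [DecidableEq α] (R : Finset α → α → Prop) : Prop :=
  ∀ X x Y y, R X x → R Y y → x ∈ Y → R ((X ∪ Y) \ {x, y}) y

/-- The transitive closure of a menu-item relation: the smallest transitive
menu-item relation containing it. -/
def MTransClosure {α : Type*} [DecidableEq α] (R : Finset α → α → Prop) :
    Finset α → α → Prop :=
  fun X x => ∀ S : Finset α → α → Prop, MTrans S → (∀ Y y, R Y y → S Y y) → S X x

section AdjoinAux

variable {α : Type*} [DecidableEq α]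

/-- Invariant preserved by menu-item composition for `R ∪ {({x}, y)}`. -/
def SInv (R : Finset α → α → Prop) (x y : α) (X : Finset α) (z : α) : Prop :=
  X ≠ ∅ ∧ z ∉ X ∧
    (R X z ∨
      ((z = y ∨ ∃ A, R A z ∧ ∀ v ∈ A, v = y ∨ v ∈ X ∨ v = x) ∧
       (x ∈ X ∨ ∃ W, R W x ∧ ∀ v ∈ W, v = y ∨ v ∈ X ∨ v = x)))

/-- Pure propositional resolution step used in `cleanAB`. -/
lemma resolve6 {v y x a b c : α} {T : Finset α}
    (h : v = y ∨ v ∈ T ∨ v = x ∨ v = a ∨ v = b ∨ v = c)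
    (ha : (a = y ∨ a ∈ T ∨ a = x) ∨ v ≠ a)
    (hb : (b = y ∨ b ∈ T ∨ b = x) ∨ v ≠ b) :
    v = y ∨ v ∈ T ∨ v = x ∨ v = c := by
  rcases h with h | h | h | h | h | h
  · exact Or.inl h
  · exact Or.inr (Or.inl h)
  · exact Or.inr (Or.inr (Or.inl h))
  · subst h
    rcases ha with ha | ha
    · rcases ha with h | h | h
      · exact Or.inl h
      · exact Or.inr (Or.inl h)
      · exact Or.inr (Or.inr (Or.inl h))
    · exact absurd rfl ha
  · subst h
    rcases hb with hb | hb
    · rcases hb with h | h | h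
      · exact Or.inl h
      · exact Or.inr (Or.inl h)
      · exact Or.inr (Or.inr (Or.inl h))
    · exact absurd rfl hb
  · exact Or.inr (Or.inr (Or.inr h))

variable {R : Finset α → α → Prop} {x y : α}

lemma acert_of {X : Finset α} {z : α} (h : SInv R x y X z) :
    z = y ∨ ∃ A, R A z ∧ ∀ v ∈ A, v = y ∨ v ∈ X ∨ v = x := by
  rcases h.2.2 with h' | h'
  · exact Or.inr ⟨X, h', fun v hv => Or.inr (Or.inl hv)⟩
  · exact h'.1

lemma hS_aux (hPr : MProper R) (hnR : ¬ R {y} x) {M : Finset α} (hM : R M x)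
    (hsub : M ⊆ {y}) : False := by
  rcases Finset.subset_singleton_iff.mp hsub with h | h
  · exact hPr M x hM h
  · rw [h] at hM; exact hnR hM

lemma sub1 (hIrr : MIrrefl R) (hTr : MTrans R)
    {B : Finset α} {b : α} {W : Finset α} {c : α} (hB : R B b) (hW : R W c) :
    ∃ W', R W' c ∧ W' ⊆ B ∪ W ∧ b ∉ W' ∧ c ∉ W' := by
  by_cases hbW : b ∈ W
  · exact ⟨(B ∪ W) \ {b, c}, hTr B b W c hB hW hbW, sdiff_subset, by simp, by simp⟩
  · exact ⟨W, hW, subset_union_right, hbW, hIrr W c hW⟩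

/-- Clean the occurrences of `a` and `b` out of an `R`-menu for `c`,
using (optional) `R`-menus for `a` and `b`. -/
lemma cleanAB (hIrr : MIrrefl R) (hTr : MTrans R)
    (T : Finset α) (a b c : α) (W : Finset α) (hW : R W c)
    (hWb : ∀ v ∈ W, v = y ∨ v ∈ T ∨ v = x ∨ v = a ∨ v = b ∨ v = c)
    (ha : (a = y ∨ a ∈ T ∨ a = x) ∨
        ∃ A, R A a ∧ ∀ v ∈ A, v = y ∨ v ∈ T ∨ v = x ∨ v = a ∨ v = b ∨ v = c)
    (hb : (b = y ∨ b ∈ T ∨ b = x) ∨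
        ∃ B, R B b ∧ ∀ v ∈ B, v = y ∨ v ∈ T ∨ v = x ∨ v = a ∨ v = b ∨ v = c) :
    ∃ W', R W' c ∧ ∀ v ∈ W', v = y ∨ v ∈ T ∨ v = x ∨ v = c := by
  rcases ha with ha | ⟨A, hA, hAb⟩
  · rcases hb with hb | ⟨B, hB, hBb⟩
    · -- both trivial
      exact ⟨W, hW, fun v hv => resolve6 (hWb v hv) (Or.inl ha) (Or.inl hb)⟩
    · -- clean only b
      obtain ⟨W', hW', hsub, hbW', hcW'⟩ := sub1 hIrr hTr hB hW
      refine ⟨W', hW', fun v hv => ?_⟩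
      have hvb : v ≠ b := fun h => hbW' (h ▸ hv)
      rcases mem_union.mp (hsub hv) with h | h
      · exact resolve6 (hBb v h) (Or.inl ha) (Or.inr hvb)
      · exact resolve6 (hWb v h) (Or.inl ha) (Or.inr hvb)
  · rcases hb with hb | ⟨B, hB, hBb⟩
    · -- clean only a
      obtain ⟨W', hW', hsub, haW', hcW'⟩ := sub1 hIrr hTr hA hW
      refine ⟨W', hW', fun v hv => ?_⟩
      have hva : v ≠ a := fun h => haW' (h ▸ hv)
      rcases mem_union.mp (hsub hv) with h | h
      · exact resolve6 (hAb v h) (Or.inr hva) (Or.inl hb)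
      · exact resolve6 (hWb v h) (Or.inr hva) (Or.inl hb)
    · -- both real menus: pre-clean A of b, then clean b and a out of W
      obtain ⟨A₁, hA₁, hA₁s, hbA₁, haA₁⟩ := sub1 hIrr hTr hB hA
      obtain ⟨W₁, hW₁, hW₁s, hbW₁, hcW₁⟩ := sub1 hIrr hTr hB hW
      obtain ⟨W₂, hW₂, hW₂s, haW₂, hcW₂⟩ := sub1 hIrr hTr hA₁ hW₁
      refine ⟨W₂, hW₂, fun v hv => ?_⟩
      have hva : v ≠ a := fun h => haW₂ (h ▸ hv)
      have hvb : v ≠ b := by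
        intro h
        subst h
        rcases mem_union.mp (hW₂s hv) with h | h
        · exact hbA₁ h
        · exact hbW₁ h
      rcases mem_union.mp (hW₂s hv) with h | h
      · rcases mem_union.mp (hA₁s h) with h2 | h2
        · exact resolve6 (hBb v h2) (Or.inr hva) (Or.inr hvb)
        · exact resolve6 (hAb v h2) (Or.inr hva) (Or.inr hvb)
      · rcases mem_union.mp (hW₁s h) with h2 | h2
        · exact resolve6 (hBb v h2) (Or.inr hva) (Or.inr hvb)
        · exact resolve6 (hWb v h2) (Or.inr hva) (Or.inr hvb)

/-- No "two-singleton cycle": two SInv facts whose menus collapse to the other's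
target lead to a contradiction. -/
lemma punch (hIrr : MIrrefl R) (hTr : MTrans R) (hPr : MProper R)
    (hxy : x ≠ y) (hnR : ¬ R {y} x)
    {X Y : Finset α} {a b : α}
    (hSX : SInv R x y X a) (hSY : SInv R x y Y b) (haY : a ∈ Y)
    (hXb : ∀ v ∈ X, v = b) (hYa : ∀ v ∈ Y, v = a) : False := by
  obtain ⟨hXne, haX, hX3⟩ := hSX
  obtain ⟨hYne, hbY, hY3⟩ := hSY
  have hacX := acert_of (R := R) (x := x) (y := y) ⟨hXne, haX, hX3⟩
  have hacY := acert_of (R := R) (x := x) (y := y) ⟨hYne, hbY, hY3⟩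
  -- finishing move: from any R-menu for x inside {y, x, a, b}, derive False
  have final : ∀ W₀ : Finset α, R W₀ x →
      (∀ v ∈ W₀, v = y ∨ v = x ∨ v = a ∨ v = b) → False := by
    intro W₀ hW₀ hW₀b
    have ha' : (a = y ∨ a ∈ (∅ : Finset α) ∨ a = x) ∨
        ∃ A, R A a ∧ ∀ v ∈ A, v = y ∨ v ∈ (∅ : Finset α) ∨ v = x ∨ v = a ∨ v = b ∨ v = x := by
      rcases hacX with h | ⟨A, hA, hAb⟩
      · exact Or.inl (Or.inl h)
      · refine Or.inr ⟨A, hA, fun v hv => ?_⟩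
        rcases hAb v hv with h | h | h
        · exact Or.inl h
        · exact Or.inr (Or.inr (Or.inr (Or.inr (Or.inl (hXb v h)))))
        · exact Or.inr (Or.inr (Or.inl h))
    have hb' : (b = y ∨ b ∈ (∅ : Finset α) ∨ b = x) ∨
        ∃ B, R B b ∧ ∀ v ∈ B, v = y ∨ v ∈ (∅ : Finset α) ∨ v = x ∨ v = a ∨ v = b ∨ v = x := by
      rcases hacY with h | ⟨B, hB, hBb⟩
      · exact Or.inl (Or.inl h)
      · refine Or.inr ⟨B, hB, fun v hv => ?_⟩
        rcases hBb v hv with h | h | h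
        · exact Or.inl h
        · exact Or.inr (Or.inr (Or.inr (Or.inl (hYa v h))))
        · exact Or.inr (Or.inr (Or.inl h))
    obtain ⟨W', hW', hW'b⟩ := cleanAB hIrr hTr (∅ : Finset α) a b x W₀ hW₀
      (fun v hv => by
        rcases hW₀b v hv with h | h | h | h
        · exact Or.inl h
        · exact Or.inr (Or.inr (Or.inl h))
        · exact Or.inr (Or.inr (Or.inr (Or.inl h)))
        · exact Or.inr (Or.inr (Or.inr (Or.inr (Or.inl h)))))
      ha' hb'
    apply hS_aux hPr hnR hW'
    intro v hv
    rcases hW'b v hv with h | h | h | h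
    · simp [h]
    · exact absurd h (notMem_empty v)
    · exact absurd (h ▸ hv) (hIrr W' x hW')
    · exact absurd (h ▸ hv) (hIrr W' x hW')
  by_cases hRX : R X a
  · by_cases hRY : R Y b
    · have h := hTr X a Y b hRX hRY haY
      have he : (X ∪ Y) \ {a, b} = ∅ := by
        apply eq_empty_iff_forall_notMem.mpr
        intro v hv
        simp only [mem_sdiff, mem_union, mem_insert, mem_singleton] at hv
        rcases hv.1 with h1 | h1
        · exact hv.2 (Or.inr (hXb v h1))
        · exact hv.2 (Or.inl (hYa v h1))
      rw [he] at h
      exact hPr _ _ h rfl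
    · -- Y is a new-type fact
      rcases hY3 with h | ⟨_, hxcY⟩
      · exact hRY h
      rcases hxcY with hxY | ⟨W, hW, hWb⟩
      · -- x ∈ Y, so x = a
        have hxa : x = a := hYa x hxY
        rcases hacX with hay | ⟨A, hA, hAb⟩
        · exact hxy (hxa.trans hay)
        · refine final A (by rw [hxa]; exact hA) (fun v hv => ?_)
          rcases hAb v hv with h | h | h
          · exact Or.inl h
          · exact Or.inr (Or.inr (Or.inr (hXb v h)))
          · exact Or.inr (Or.inl h)
      · refine final W hW (fun v hv => ?_)
        rcases hWb v hv with h | h | h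
        · exact Or.inl h
        · exact Or.inr (Or.inr (Or.inl (hYa v h)))
        · exact Or.inr (Or.inl h)
  · -- X is a new-type fact
    rcases hX3 with h | ⟨_, hxcX⟩
    · exact hRX h
    rcases hxcX with hxX | ⟨W, hW, hWb⟩
    · -- x ∈ X, so x = b
      have hxb : x = b := hXb x hxX
      rcases hacY with hby | ⟨B, hB, hBb⟩
      · exact hxy (hxb.trans hby)
      · refine final B (by rw [hxb]; exact hB) (fun v hv => ?_)
        rcases hBb v hv with h | h | h
        · exact Or.inl h
        · exact Or.inr (Or.inr (Or.inl (hYa v h)))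
        · exact Or.inr (Or.inl h)
    · refine final W hW (fun v hv => ?_)
      rcases hWb v hv with h | h | h
      · exact Or.inl h
      · exact Or.inr (Or.inr (Or.inr (hXb v h)))
      · exact Or.inr (Or.inl h)

/-- The invariant is closed under menu-item composition. -/
lemma mtrans_SInv (hIrr : MIrrefl R) (hTr : MTrans R) (hPr : MProper R)
    (hxy : x ≠ y) (hnR : ¬ R {y} x) : MTrans (SInv R x y) := by
  intro X a Y b hSX hSY haY
  obtain ⟨hXne, haX, hX3⟩ := hSX
  obtain ⟨hYne, hbY, hY3⟩ := hSY
  have hZ : ∀ v, (v ∈ X ∨ v ∈ Y) → v ≠ a → v ≠ b → v ∈ (X ∪ Y) \ {a, b} := by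
    intro v h1 h2 h3
    simp only [mem_sdiff, mem_union, mem_insert, mem_singleton]
    exact ⟨h1, fun h => h.elim h2 h3⟩
  refine ⟨?_, by simp, ?_⟩
  · -- nonemptiness
    intro hZe
    have hXb : ∀ v ∈ X, v = b := by
      intro v hv
      by_contra hvb
      have hva : v ≠ a := fun h => haX (h ▸ hv)
      have := hZ v (Or.inl hv) hva hvb
      rw [hZe] at this
      exact notMem_empty v this
    have hYa : ∀ v ∈ Y, v = a := by
      intro v hv
      by_contra hva
      have hvb : v ≠ b := fun h => hbY (h ▸ hv)
      have := hZ v (Or.inr hv) hva hvb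
      rw [hZe] at this
      exact notMem_empty v this
    exact punch hIrr hTr hPr hxy hnR ⟨hXne, haX, hX3⟩ ⟨hYne, hbY, hY3⟩ haY hXb hYa
  · -- main disjunction
    by_cases hboth : R X a ∧ R Y b
    · exact Or.inl (hTr X a Y b hboth.1 hboth.2 haY)
    have hacX := acert_of (R := R) (x := x) (y := y) ⟨hXne, haX, hX3⟩
    have hacY := acert_of (R := R) (x := x) (y := y) ⟨hYne, hbY, hY3⟩
    -- generic adapters
    have haGen : ∀ c : α, (a = y ∨ a ∈ (X ∪ Y) \ {a, b} ∨ a = x) ∨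
        ∃ A, R A a ∧ ∀ v ∈ A,
          v = y ∨ v ∈ (X ∪ Y) \ {a, b} ∨ v = x ∨ v = a ∨ v = b ∨ v = c := by
      intro c
      rcases hacX with h | ⟨A, hA, hAb⟩
      · exact Or.inl (Or.inl h)
      · refine Or.inr ⟨A, hA, fun v hv => ?_⟩
        rcases hAb v hv with h | h | h
        · exact Or.inl h
        · by_cases hva : v = a
          · exact Or.inr (Or.inr (Or.inr (Or.inl hva)))
          · by_cases hvb : v = b
            · exact Or.inr (Or.inr (Or.inr (Or.inr (Or.inl hvb))))
            · exact Or.inr (Or.inl (hZ v (Or.inl h) hva hvb))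
        · exact Or.inr (Or.inr (Or.inl h))
    have hbGen : ∀ c : α, (b = y ∨ b ∈ (X ∪ Y) \ {a, b} ∨ b = x) ∨
        ∃ B, R B b ∧ ∀ v ∈ B,
          v = y ∨ v ∈ (X ∪ Y) \ {a, b} ∨ v = x ∨ v = a ∨ v = b ∨ v = c := by
      intro c
      rcases hacY with h | ⟨B, hB, hBb⟩
      · exact Or.inl (Or.inl h)
      · refine Or.inr ⟨B, hB, fun v hv => ?_⟩
        rcases hBb v hv with h | h | h
        · exact Or.inl h
        · by_cases hva : v = a
          · exact Or.inr (Or.inr (Or.inr (Or.inl hva)))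
          · by_cases hvb : v = b
            · exact Or.inr (Or.inr (Or.inr (Or.inr (Or.inl hvb))))
            · exact Or.inr (Or.inl (hZ v (Or.inr h) hva hvb))
        · exact Or.inr (Or.inr (Or.inl h))
    -- Part 1 : certificate for the target b
    have part1 : b = y ∨ ∃ V, R V b ∧
        ∀ v ∈ V, v = y ∨ v ∈ (X ∪ Y) \ {a, b} ∨ v = x := by
      rcases hacY with h | ⟨V, hV, hVb⟩
      · exact Or.inl h
      · have ha' := haGen b
        have hmass : ∀ (A : Finset α),
            (∀ v ∈ A, v = y ∨ v ∈ (X ∪ Y) \ {a, b} ∨ v = x ∨ v = a ∨ v = b ∨ v = b) →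
            ∀ v ∈ A, v = y ∨ v ∈ (X ∪ Y) \ {a, b} ∨ v = x ∨ v = a ∨ v = a ∨ v = b := by
          intro A hA v hv
          rcases hA v hv with h | h | h | h | h | h
          · exact Or.inl h
          · exact Or.inr (Or.inl h)
          · exact Or.inr (Or.inr (Or.inl h))
          · exact Or.inr (Or.inr (Or.inr (Or.inl h)))
          · exact Or.inr (Or.inr (Or.inr (Or.inr (Or.inr h))))
          · exact Or.inr (Or.inr (Or.inr (Or.inr (Or.inr h))))
        have haarg : (a = y ∨ a ∈ (X ∪ Y) \ {a, b} ∨ a = x) ∨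
            ∃ A, R A a ∧ ∀ v ∈ A,
              v = y ∨ v ∈ (X ∪ Y) \ {a, b} ∨ v = x ∨ v = a ∨ v = a ∨ v = b := by
          rcases ha' with h | ⟨A, hA, hAb⟩
          · exact Or.inl h
          · exact Or.inr ⟨A, hA, hmass A hAb⟩
        obtain ⟨V', hV', hV'b⟩ := cleanAB hIrr hTr ((X ∪ Y) \ {a, b}) a a b V hV
          (fun v hv => by
            rcases hVb v hv with h | h | h
            · exact Or.inl h
            · by_cases hva : v = a
              · exact Or.inr (Or.inr (Or.inr (Or.inl hva)))
              · by_cases hvb : v = b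
                · exact Or.inr (Or.inr (Or.inr (Or.inr (Or.inr hvb))))
                · exact Or.inr (Or.inl (hZ v (Or.inr h) hva hvb))
            · exact Or.inr (Or.inr (Or.inl h)))
          haarg haarg
        refine Or.inr ⟨V', hV', fun v hv => ?_⟩
        rcases hV'b v hv with h | h | h | h
        · exact Or.inl h
        · exact Or.inr (Or.inl h)
        · exact Or.inr (Or.inr h)
        · exact absurd (h ▸ hv) (hIrr V' b hV')
    -- Part 2 : certificate for x
    have hfin : ∀ W₀ : Finset α, R W₀ x →
        (∀ v ∈ W₀, v = y ∨ v ∈ (X ∪ Y) \ {a, b} ∨ v = x ∨ v = a ∨ v = b) →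
        (x ∈ (X ∪ Y) \ {a, b} ∨ ∃ W, R W x ∧
          ∀ v ∈ W, v = y ∨ v ∈ (X ∪ Y) \ {a, b} ∨ v = x) := by
      intro W₀ hW₀ hW₀b
      obtain ⟨W', hW', hW'b⟩ := cleanAB hIrr hTr ((X ∪ Y) \ {a, b}) a b x W₀ hW₀
        (fun v hv => by
          rcases hW₀b v hv with h | h | h | h | h
          · exact Or.inl h
          · exact Or.inr (Or.inl h)
          · exact Or.inr (Or.inr (Or.inl h))
          · exact Or.inr (Or.inr (Or.inr (Or.inl h)))
          · exact Or.inr (Or.inr (Or.inr (Or.inr (Or.inl h)))))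
        (haGen x) (hbGen x)
      refine Or.inr ⟨W', hW', fun v hv => ?_⟩
      rcases hW'b v hv with h | h | h | h
      · exact Or.inl h
      · exact Or.inr (Or.inl h)
      · exact Or.inr (Or.inr h)
      · exact Or.inr (Or.inr h)
    have part2 : x ∈ (X ∪ Y) \ {a, b} ∨ ∃ W, R W x ∧
        ∀ v ∈ W, v = y ∨ v ∈ (X ∪ Y) \ {a, b} ∨ v = x := by
      by_cases hRX : R X a
      · -- then Y must be new-type
        have hRY : ¬ R Y b := fun h => hboth ⟨hRX, h⟩
        rcases hY3 with h | ⟨_, hxcY⟩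
        · exact absurd h hRY
        rcases hxcY with hxY | ⟨W₂, hW₂, hW₂b⟩
        · by_cases hxa : x = a
          · refine hfin X (by rw [hxa]; exact hRX) (fun v hv => ?_)
            by_cases hva : v = a
            · exact Or.inr (Or.inr (Or.inr (Or.inl hva)))
            · by_cases hvb : v = b
              · exact Or.inr (Or.inr (Or.inr (Or.inr hvb)))
              · exact Or.inr (Or.inl (hZ v (Or.inl hv) hva hvb))
          · have hxb : x ≠ b := fun h => hbY (h ▸ hxY)
            exact Or.inl (hZ x (Or.inr hxY) hxa hxb)
        · refine hfin W₂ hW₂ (fun v hv => ?_)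
          rcases hW₂b v hv with h | h | h
          · exact Or.inl h
          · by_cases hva : v = a
            · exact Or.inr (Or.inr (Or.inr (Or.inl hva)))
            · by_cases hvb : v = b
              · exact Or.inr (Or.inr (Or.inr (Or.inr hvb)))
              · exact Or.inr (Or.inl (hZ v (Or.inr h) hva hvb))
          · exact Or.inr (Or.inr (Or.inl h))
      · -- X is new-type
        rcases hX3 with h | ⟨_, hxcX⟩
        · exact absurd h hRX
        rcases hxcX with hxX | ⟨W₁, hW₁, hW₁b⟩
        · by_cases hxb : x = b
          · rcases part1 with hby | ⟨V', hV', hV'b⟩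
            · exact absurd (hxb.trans hby) hxy
            · exact Or.inr ⟨V', by rw [hxb]; exact hV', hV'b⟩
          · have hxa : x ≠ a := fun h => haX (h ▸ hxX)
            exact Or.inl (hZ x (Or.inl hxX) hxa hxb)
        · refine hfin W₁ hW₁ (fun v hv => ?_)
          rcases hW₁b v hv with h | h | h
          · exact Or.inl h
          · by_cases hva : v = a
            · exact Or.inr (Or.inr (Or.inr (Or.inl hva)))
            · by_cases hvb : v = b
              · exact Or.inr (Or.inr (Or.inr (Or.inr hvb)))
              · exact Or.inr (Or.inl (hZ v (Or.inl h) hva hvb))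
          · exact Or.inr (Or.inr (Or.inl h))
    exact Or.inr ⟨part1, part2⟩

end AdjoinAux

/-- Lemma 3: adjoining a single pair `({x}, y)` with `¬({y} R x)`
and taking the transitive closure preserves irreflexivity and properness. -/
theorem transClosure_adjoin_irrefl_proper {α : Type*} [DecidableEq α]
    (R : Finset α → α → Prop)
    (hIrr : MIrrefl R) (hTr : MTrans R) (hPr : MProper R)
    (x y : α) (hxy : x ≠ y) (hnR : ¬ R {y} x) :
    MIrrefl (MTransClosure fun X z => R X z ∨ (X = {x} ∧ z = y)) ∧
    MProper (MTransClosure fun X z => R X z ∨ (X = {x} ∧ z = y)) := by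
  have hMT : MTrans (SInv R x y) := mtrans_SInv hIrr hTr hPr hxy hnR
  have hBase : ∀ Y z, (R Y z ∨ (Y = {x} ∧ z = y)) → SInv R x y Y z := by
    intro Y z h
    rcases h with h | ⟨h1, h2⟩
    · exact ⟨hPr Y z h, hIrr Y z h, Or.inl h⟩
    · subst h1; subst h2
      refine ⟨by simp, ?_, Or.inr ⟨Or.inl rfl, Or.inl (mem_singleton_self x)⟩⟩
      simpa using Ne.symm hxy
  constructor
  · intro X z h
    exact (h (SInv R x y) hMT hBase).2.1
  · intro X z h
    exact (h (SInv R x y) hMT hBase).1
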